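/- Let $P$ be a quadratic polynomial on $\mathbb{R}^n$ and let $v : h\mathbb{Z}^n \cap U \to \mathbb{R}$ be a mesh function. Fix $x \in U$, $\theta > 0$, and let $x^*$ be a point attaining the supremum in the mesh sup-convolution $v^{\theta,+}(x) = \sup_{z}\{v(z) - |x-z|^2/(2\theta)\}$. Suppose $P(x) = v^{\theta,+}(x)$ and $P(y) \ge v^{\theta,+}(y)$ for all $y \in B_{hN}(x)$. Then for every $y \in h\mathbb{Z}^n$ with $0 < |y| \le Nh$, the second difference satisfies $\delta_y^2 P(x^*) \ge \delta_y^2 v(x^*)$, where $\delta_y^2 w(z) = (w(z-y) - 2w(z) + w(z+y))/|y|^2$. -/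

import Mathlib

open Metric

/-- If a quadratic polynomial `P` touches the mesh sup-convolution `v^{θ,+}` from above at
`x` on the ball `B_{hN}(x)`, and `x*` attains the supremum defining `v^{θ,+}(x)`, then for
every mesh vector `y` with `0 < |y| ≤ Nh`, the second differences satisfy
`δ²_y P(x*) ≥ δ²_y v(x*)`. -/
theorem stmt18 (n N : ℕ) (h : ℝ) (hh : 0 < h)
    (U S : Set (EuclideanSpace ℝ (Fin n)))
    (hS : S = {z ∈ U | ∃ m : Fin n → ℤ, ∀ i, z i = h * (m i : ℝ)})
    (v : EuclideanSpace ℝ (Fin n) → ℝ)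
    (θ : ℝ) (hθ : 0 < θ)
    (vplus : EuclideanSpace ℝ (Fin n) → ℝ)
    (hvplus : ∀ w, vplus w = sSup {z : ℝ | ∃ y ∈ S, z = v y - ‖w - y‖ ^ 2 / (2 * θ)})
    (hbdd : ∀ w : EuclideanSpace ℝ (Fin n),
      BddAbove {z : ℝ | ∃ y ∈ S, z = v y - ‖w - y‖ ^ 2 / (2 * θ)})
    (x : EuclideanSpace ℝ (Fin n)) (hx : x ∈ U)
    (xs : EuclideanSpace ℝ (Fin n)) (hxs : xs ∈ S)
    (hattain : vplus x = v xs - ‖x - xs‖ ^ 2 / (2 * θ))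
    (P : EuclideanSpace ℝ (Fin n) → ℝ)
    (hquad : ∃ (c : ℝ) (p : EuclideanSpace ℝ (Fin n))
        (B : EuclideanSpace ℝ (Fin n) →L[ℝ] EuclideanSpace ℝ (Fin n)),
      ∀ z, P z = c + (inner ℝ p z : ℝ) + (inner ℝ (B z) z : ℝ))
    (hPx : P x = vplus x)
    (hPge : ∀ w ∈ ball x (h * N), vplus w ≤ P w)
    (y : EuclideanSpace ℝ (Fin n)) (hy : ∃ m : Fin n → ℤ, ∀ i, y i = h * (m i : ℝ))
    (hy0 : 0 < ‖y‖) (hyN : ‖y‖ ≤ N * h)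
    (hxsy : xs + y ∈ S) (hxsy' : xs - y ∈ S) :
    (v (xs - y) - 2 * v xs + v (xs + y)) / ‖y‖ ^ 2
      ≤ (P (xs - y) - 2 * P xs + P (xs + y)) / ‖y‖ ^ 2 := by

  obtain ⟨c, p, B, hP⟩ := hquad
  have hNh : (0:ℝ) < N * h := lt_of_lt_of_le hy0 hyN
  have hPcont : Continuous P := by
    have hPe : P = fun z => c + (inner ℝ p z : ℝ) + (inner ℝ (B z) z : ℝ) := funext hP
    rw [hPe]
    exact (continuous_const.add (continuous_const.inner continuous_id)).add
      (B.continuous.inner continuous_id)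
  have key : ∀ w : EuclideanSpace ℝ (Fin n), xs + w ∈ S → ‖w‖ ≤ N * h →
      v (xs + w) - ‖x - xs‖ ^ 2 / (2 * θ) ≤ P (x + w) := by
    intro w hwS hwN
    have hf : Filter.Tendsto (fun t : ℝ => P (x + t • w)) (nhdsWithin 1 (Set.Iio 1))
        (nhds (P (x + w))) := by
      have hc : Continuous (fun t : ℝ => x + t • w) :=
        continuous_const.add (continuous_id.smul continuous_const)
      have := (hPcont.comp hc).tendsto 1
      simpa [Function.comp_def] using this.mono_left nhdsWithin_le_nhds
    have hg : Filter.Tendsto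
        (fun t : ℝ => v (xs + w) - ‖x + t • w - (xs + w)‖ ^ 2 / (2 * θ))
        (nhdsWithin 1 (Set.Iio 1))
        (nhds (v (xs + w) - ‖x - xs‖ ^ 2 / (2 * θ))) := by
      have hc : Continuous
          (fun t : ℝ => v (xs + w) - ‖x + t • w - (xs + w)‖ ^ 2 / (2 * θ)) :=
        continuous_const.sub
          ((((continuous_const.add (continuous_id.smul continuous_const)).sub
            continuous_const).norm.pow 2).div_const _)
      have := hc.tendsto 1
      have he : x + (1:ℝ) • w - (xs + w) = x - xs := by
        simp [one_smul]
      rw [he] at this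
      exact this.mono_left nhdsWithin_le_nhds
    have hev : ∀ᶠ t : ℝ in nhdsWithin 1 (Set.Iio 1),
        v (xs + w) - ‖x + t • w - (xs + w)‖ ^ 2 / (2 * θ) ≤ P (x + t • w) := by
      have hIoo : Set.Ioo (0:ℝ) 1 ∈ nhdsWithin 1 (Set.Iio 1) :=
        Ioo_mem_nhdsLT_of_mem (by constructor <;> norm_num)
      filter_upwards [hIoo] with t ht
      have hball : x + t • w ∈ ball x (h * ↑N) := by
        rw [mem_ball, dist_eq_norm]
        have he : x + t • w - x = t • w := by abel
        rw [he, norm_smul]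
        have h1 : ‖t‖ * ‖w‖ ≤ ‖t‖ * (N * h) := by
          apply mul_le_mul_of_nonneg_left hwN (norm_nonneg t)
        have h2 : ‖t‖ * (N * h) < 1 * (N * h) := by
          apply mul_lt_mul_of_pos_right _ hNh
          rw [Real.norm_eq_abs, abs_of_pos ht.1]
          exact ht.2
        calc ‖t‖ * ‖w‖ ≤ ‖t‖ * (N * h) := h1
          _ < 1 * (N * h) := h2
          _ = h * N := by ring
      have hle : v (xs + w) - ‖x + t • w - (xs + w)‖ ^ 2 / (2 * θ)
          ≤ vplus (x + t • w) := by
        rw [hvplus]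
        exact le_csSup (hbdd _) ⟨xs + w, hwS, rfl⟩
      exact hle.trans (hPge _ hball)
    exact le_of_tendsto_of_tendsto hg hf hev
  have hA : v (xs + y) - ‖x - xs‖ ^ 2 / (2 * θ) ≤ P (x + y) := key y hxsy hyN
  have hB : v (xs - y) - ‖x - xs‖ ^ 2 / (2 * θ) ≤ P (x - y) := by
    have := key (-y) (by rwa [← sub_eq_add_neg]) (by rwa [norm_neg])
    rwa [← sub_eq_add_neg, ← sub_eq_add_neg] at this
  have hX : P x = v xs - ‖x - xs‖ ^ 2 / (2 * θ) := by rw [hPx, hattain]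
  have hconst : ∀ z, P (z - y) - 2 * P z + P (z + y) = 2 * (inner ℝ (B y) y : ℝ) := by
    intro z
    simp only [hP, map_add, map_sub, inner_add_left, inner_add_right,
      inner_sub_left, inner_sub_right]
    ring
  have hmain : v (xs - y) - 2 * v xs + v (xs + y)
      ≤ P (xs - y) - 2 * P xs + P (xs + y) := by
    rw [hconst xs, ← hconst x]
    have : P (x - y) - 2 * P x + P (x + y)
        ≥ (v (xs - y) - ‖x - xs‖ ^ 2 / (2 * θ)) - 2 * (v xs - ‖x - xs‖ ^ 2 / (2 * θ))
          + (v (xs + y) - ‖x - xs‖ ^ 2 / (2 * θ)) := by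
      rw [hX]; linarith
    linarith
  have hy2 : (0:ℝ) < ‖y‖ ^ 2 := by positivity
  gcongr
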